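/- Invariance of the RGMJMCMC swap move (Theorem 2): Let M and S be finite nonempty types, let π be a probability mass function on M, and let q_S : M → PMF S, q_o : S × M → PMF M, and q_r : S × M → PMF M be proposal kernels. Generate the tuple (m, S', m'_k, m', S, m_k) with joint probability π(m) · q_S(m)(S') · q_o(S', m)(m'_k) · q_r(S', m'_k)(m') · q_S(m')(S) · q_o(S, m')(m_k), and set m* = m' with probability min{1, a_mh} and m* = m otherwise, where a_mh = (π(m') · q_r(S, m_k)(m)) / (π(m) · q_r(S', m'_k)(m')), with the convention that the proposal is rejected (m* = m) whenever the denominator is zero; note the denominator is positive on every outcome of positive joint probability. Then the marginal law of m* is π: for every m₀ ∈ M, the total probability that m* = m₀ equals π(m₀). -/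

import Mathlib

/-- **Invariance of the RGMJMCMC swap move (Theorem 2).**
Let `π` be a probability mass function on a finite nonempty type `M` of models, and let
`qS`, `qo`, `qr` be proposal kernels (row-wise probability mass functions) over a finite
nonempty type `S` of populations.  Generate the tuple `(m, s', mk', m', s, mk)` with joint
probability `π m · qS m s' · qo s' m mk' · qr s' mk' m' · qS m' s · qo s m' mk`, and set
`m* = m'` with probability `min {1, a_mh}` (and `m* = m` otherwise), where
`a_mh = (π m' · qr s mk m) / (π m · qr s' mk' m')`, the proposal being rejected whenever
the denominator vanishes.  Then the marginal law of `m*` is `π`: for every model `m₀`,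
the total probability that `m* = m₀` equals `π m₀`. -/
theorem rgmjmcmc_invariance
    {M S : Type*} [Fintype M] [Nonempty M] [DecidableEq M] [Fintype S] [Nonempty S]
    (π : M → ℝ) (hπ0 : ∀ m, 0 ≤ π m) (hπ1 : ∑ m, π m = 1)
    (qS : M → S → ℝ) (hqS0 : ∀ m s, 0 ≤ qS m s) (hqS1 : ∀ m, ∑ s, qS m s = 1)
    (qo : S → M → M → ℝ) (hqo0 : ∀ s m m', 0 ≤ qo s m m') (hqo1 : ∀ s m, ∑ m', qo s m m' = 1)
    (qr : S → M → M → ℝ) (hqr0 : ∀ s m m', 0 ≤ qr s m m') (hqr1 : ∀ s m, ∑ m', qr s m m' = 1)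
    (m₀ : M) :
    (∑ m : M, ∑ s' : S, ∑ mk' : M, ∑ m' : M, ∑ s : S, ∑ mk : M,
      (π m * qS m s' * qo s' m mk' * qr s' mk' m' * qS m' s * qo s m' mk) *
        ((if π m * qr s' mk' m' = 0 then 0
            else min 1 ((π m' * qr s mk m) / (π m * qr s' mk' m'))) *
              (if m' = m₀ then 1 else 0) +
         (1 - (if π m * qr s' mk' m' = 0 then 0
            else min 1 ((π m' * qr s mk m) / (π m * qr s' mk' m')))) *
              (if m = m₀ then 1 else 0)))
      = π m₀ := by
  classical
  set g : M → S → M → M → S → M → ℝ := fun m s' mk' m' s mk =>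
    (qS m s' * qo s' m mk' * qS m' s * qo s m' mk) *
      min (π m * qr s' mk' m') (π m' * qr s mk m) with hg
  -- accepted mass equals symmetric quantity
  have hJα : ∀ m s' mk' m' s mk,
      (π m * qS m s' * qo s' m mk' * qr s' mk' m' * qS m' s * qo s m' mk) *
        (if π m * qr s' mk' m' = 0 then 0
            else min 1 ((π m' * qr s mk m) / (π m * qr s' mk' m')))
      = g m s' mk' m' s mk := by
    intro m s' mk' m' s mk
    by_cases h : π m * qr s' mk' m' = 0
    · have hN : (0:ℝ) ≤ π m' * qr s mk m := mul_nonneg (hπ0 m') (hqr0 s mk m)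
      simp only [hg, h, if_true, mul_zero, min_eq_left hN]
    · have hD : 0 < π m * qr s' mk' m' :=
        lt_of_le_of_ne (mul_nonneg (hπ0 m) (hqr0 s' mk' m')) (Ne.symm h)
      rw [if_neg h]
      have h1 : (π m * qr s' mk' m') * min 1 ((π m' * qr s mk m) / (π m * qr s' mk' m'))
          = min (π m * qr s' mk' m') (π m' * qr s mk m) := by
        rw [mul_min_of_nonneg _ _ hD.le, mul_one]
        congr 1
        rw [mul_div_assoc', mul_div_cancel_left₀ _ hD.ne']
      simp only [hg]
      linear_combination (qS m s' * qo s' m mk' * qS m' s * qo s m' mk) * h1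
  have hsym : ∀ m s' mk' m' s mk, g m s' mk' m' s mk = g m' s mk m s' mk' := by
    intro m s' mk' m' s mk
    simp only [hg]
    rw [min_comm]
    ring
  -- swapping the two halves of a 6-fold sum
  have h6 : ∀ F G : M → S → M → M → S → M → ℝ,
      (∀ m s' mk' m' s mk, F m s' mk' m' s mk = G m' s mk m s' mk') →
      (∑ m : M, ∑ s' : S, ∑ mk' : M, ∑ m' : M, ∑ s : S, ∑ mk : M, F m s' mk' m' s mk)
      = ∑ m : M, ∑ s' : S, ∑ mk' : M, ∑ m' : M, ∑ s : S, ∑ mk : M, G m s' mk' m' s mk := by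
    intro F G hFG
    have key : (∑ a : M × S × M, ∑ b : M × S × M, F a.1 a.2.1 a.2.2 b.1 b.2.1 b.2.2)
        = ∑ a : M × S × M, ∑ b : M × S × M, G a.1 a.2.1 a.2.2 b.1 b.2.1 b.2.2 := by
      rw [Finset.sum_comm]
      exact Finset.sum_congr rfl fun a _ => Finset.sum_congr rfl fun b _ =>
        hFG b.1 b.2.1 b.2.2 a.1 a.2.1 a.2.2
    simpa [Fintype.sum_prod_type] using key
  have hswap :
      (∑ m : M, ∑ s' : S, ∑ mk' : M, ∑ m' : M, ∑ s : S, ∑ mk : M,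
        g m s' mk' m' s mk * (if m' = m₀ then 1 else 0))
      = ∑ m : M, ∑ s' : S, ∑ mk' : M, ∑ m' : M, ∑ s : S, ∑ mk : M,
        g m s' mk' m' s mk * (if m = m₀ then 1 else 0) := by
    exact h6 _ _ (fun m s' mk' m' s mk => by rw [hsym m s' mk' m' s mk])
  -- marginal term
  have hB : (∑ m : M, ∑ s' : S, ∑ mk' : M, ∑ m' : M, ∑ s : S, ∑ mk : M,
        (π m * qS m s' * qo s' m mk' * qr s' mk' m' * qS m' s * qo s m' mk) *
          (if m = m₀ then 1 else 0)) = π m₀ := by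
    rw [Finset.sum_eq_single m₀]
    · simp only [if_pos rfl, if_true, mul_one]
      simp only [← Finset.mul_sum, hqo1, hqS1, hqr1, mul_one]
    · intro b _ hb
      simp [hb]
    · intro h
      exact absurd (Finset.mem_univ m₀) h
  -- pointwise decomposition of the summand
  have main : ∀ m s' mk' m' s mk,
      (π m * qS m s' * qo s' m mk' * qr s' mk' m' * qS m' s * qo s m' mk) *
        ((if π m * qr s' mk' m' = 0 then 0
            else min 1 ((π m' * qr s mk m) / (π m * qr s' mk' m'))) *
              (if m' = m₀ then 1 else 0) +
         (1 - (if π m * qr s' mk' m' = 0 then 0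
            else min 1 ((π m' * qr s mk m) / (π m * qr s' mk' m')))) *
              (if m = m₀ then 1 else 0))
      = g m s' mk' m' s mk * (if m' = m₀ then 1 else 0)
        + (π m * qS m s' * qo s' m mk' * qr s' mk' m' * qS m' s * qo s m' mk) *
            (if m = m₀ then 1 else 0)
        - g m s' mk' m' s mk * (if m = m₀ then 1 else 0) := by
    intro m s' mk' m' s mk
    linear_combination ((if m' = m₀ then (1:ℝ) else 0) - (if m = m₀ then (1:ℝ) else 0)) *
      hJα m s' mk' m' s mk
  simp only [main]
  simp only [Finset.sum_add_distrib, Finset.sum_sub_distrib]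
  rw [hswap, hB]
  ring
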